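/- Let 0 < α ≤ π with α ≠ 2π/3. Then there exists ε₀ > 0 such that for every ε with 0 < ε ≤ ε₀, the chromatic number of the ε-distance graph D_ε(α) on the whole circle S¹ is at most 3. -/

import Mathlib

/-- The circle `S¹ = ℝ/2πℤ` with its quotient metric. -/
abbrev Circle2 : Type := AddCircle (2 * Real.pi)

instance : Fact (0 < 2 * Real.pi) := ⟨by positivity⟩

/-- `X` is an `r`-net of the circle. -/
def cIsNet (r : ℝ) (X : Set Circle2) : Prop :=
  ∀ y : Circle2, ∃ x ∈ X, dist x y ≤ r

/-- The ε-distance graph with parameter α on a set `X ⊆ S¹`: distinct points are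
adjacent iff their distance lies in `[α - ε, α + ε]`. -/
def cDistGraph (X : Set Circle2) (α ε : ℝ) : SimpleGraph X where
  Adj x y := x ≠ y ∧ α - ε ≤ dist x.1 y.1 ∧ dist x.1 y.1 ≤ α + ε
  symm := ⟨by
    intro x y h
    exact ⟨h.1.symm, by rw [dist_comm]; exact h.2.1, by rw [dist_comm]; exact h.2.2⟩⟩
  loopless := ⟨fun x h => h.1 rfl⟩

/-- The ε-distance graph with parameter α on the whole circle `S¹`. -/
def cDistGraphAll (α ε : ℝ) : SimpleGraph Circle2 where
  Adj x y := x ≠ y ∧ α - ε ≤ dist x y ∧ dist x y ≤ α + ε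
  symm := ⟨by
    intro x y h
    exact ⟨h.1.symm, by rw [dist_comm]; exact h.2.1, by rw [dist_comm]; exact h.2.2⟩⟩
  loopless := ⟨fun x h => h.1 rfl⟩

set_option maxHeartbeats 1000000 in
/-- for `0 < α ≤ π`, `α ≠ 2π/3`, the ε-distance graph on the whole circle is
`3`-colorable for all small `ε > 0`. -/
theorem stmt_11 (α : ℝ) (hα0 : 0 < α) (hαπ : α ≤ Real.pi) (hα23 : α ≠ 2 * Real.pi / 3) :
    ∃ ε₀ > (0 : ℝ), ∀ ε : ℝ, 0 < ε → ε ≤ ε₀ →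
      (cDistGraphAll α ε).chromaticNumber ≤ 3 := by
  classical
  have hπ : (0:ℝ) < Real.pi := Real.pi_pos
  set p : ℝ := 2 * Real.pi with hpdef
  have hp : (0:ℝ) < p := by positivity
  -- Find m with p < 3 m α < 2 p
  obtain ⟨m, hm0, hml, hmu⟩ : ∃ m : ℕ, 0 < m ∧ p < 3 * m * α ∧ 3 * m * α < 2 * p := by
    have hex : ∃ n : ℕ, p < 3 * ((n:ℝ) + 1) * α := by
      obtain ⟨n, hn⟩ := Archimedean.arch p hα0
      rw [nsmul_eq_mul] at hn
      exact ⟨n, by nlinarith [Nat.cast_nonneg (α := ℝ) n]⟩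
    set k := Nat.find hex with hkdef
    have hk : p < 3 * ((k:ℝ) + 1) * α := Nat.find_spec hex
    refine ⟨k + 1, k.succ_pos, by push_cast; linarith [hk], ?_⟩
    rcases Nat.eq_zero_or_pos k with h0 | hkpos
    · push_cast [h0]
      nlinarith
    · have h3α : 3 * α < p := by
        rcases lt_trichotomy (3 * α) p with h | h | h
        · exact h
        · exact absurd (by rw [hpdef] at h; linarith) hα23
        · have : k ≤ 0 := Nat.find_le (by norm_num; linarith)
          omega
      have hprev : ¬ p < 3 * (((k-1:ℕ):ℝ) + 1) * α := Nat.find_min hex (Nat.sub_lt hkpos one_pos)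
      push_neg at hprev
      rw [Nat.cast_sub hkpos] at hprev
      push_cast at hprev ⊢
      nlinarith
  set ℓ : ℝ := p / (3 * m) with hℓdef
  have hm0' : (0:ℝ) < (m:ℝ) := by exact_mod_cast hm0
  have hℓpos : 0 < ℓ := by positivity
  have hpℓ : p = 3 * m * ℓ := by
    rw [hℓdef, mul_div_assoc']; exact (mul_div_cancel_left₀ p (by positivity)).symm
  have hℓα : ℓ < α := by nlinarith [hpℓ, hml, hm0']
  have hα2ℓ : α < 2 * ℓ := by nlinarith [hpℓ, hmu, hm0']
  refine ⟨min (α - ℓ) (2*ℓ - α) / 2, by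
    have := lt_min (show (0:ℝ) < α - ℓ by linarith) (show (0:ℝ) < 2*ℓ - α by linarith)
    linarith, ?_⟩
  intro ε hε hεle
  have hεle1 : ε ≤ (α - ℓ) / 2 := le_trans hεle (by linarith [min_le_left (α - ℓ) (2*ℓ - α)])
  have hεle2 : ε ≤ (2*ℓ - α) / 2 := le_trans hεle (by linarith [min_le_right (α - ℓ) (2*ℓ - α)])
  have hlow : ℓ < α - ε := by linarith
  have hhigh : α + ε < 2 * ℓ := by linarith
  -- the coloring
  let col : Circle2 → ZMod 3 := fun x =>
    ((⌊((AddCircle.equivIco p 0 x : Set.Ico (0:ℝ) (0 + p)) : ℝ) / ℓ⌋ : ℤ) : ZMod 3)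
  have key : ∀ {x y : Circle2}, (cDistGraphAll α ε).Adj x y → col x ≠ col y := by
    intro x y hadj hcol
    change x ≠ y ∧ α - ε ≤ dist x y ∧ dist x y ≤ α + ε at hadj
    obtain ⟨hne, hlo, hhi⟩ := hadj
    set u : ℝ := ((AddCircle.equivIco p 0 x : Set.Ico (0:ℝ) (0 + p)) : ℝ) with hudef
    set v : ℝ := ((AddCircle.equivIco p 0 y : Set.Ico (0:ℝ) (0 + p)) : ℝ) with hvdef
    have hx : ((u : ℝ) : Circle2) = x := (AddCircle.equivIco p 0).symm_apply_apply x
    have hy : ((v : ℝ) : Circle2) = y := (AddCircle.equivIco p 0).symm_apply_apply y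
    have hdist : dist x y = |(u - v) - round (p⁻¹ * (u - v)) * p| := by
      rw [← hx, ← hy, dist_eq_norm, ← QuotientAddGroup.mk_sub, AddCircle.norm_eq]
    set a : ℤ := ⌊u / ℓ⌋ with hadef
    set b : ℤ := ⌊v / ℓ⌋ with hbdef
    set n : ℤ := round (p⁻¹ * (u - v)) with hndef
    have hdvd : (3:ℤ) ∣ (a - b) := by
      have : ((a - b : ℤ) : ZMod 3) = 0 := by
        push_cast
        rw [sub_eq_zero]
        exact hcol
      exact (ZMod.intCast_zmod_eq_zero_iff_dvd _ 3).mp this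
    obtain ⟨t, ht⟩ : ∃ t : ℤ, a - b - 3 * m * n = 3 * t := by
      obtain ⟨s, hs⟩ := hdvd
      exact ⟨s - m * n, by linarith [hs]⟩
    set fu : ℝ := Int.fract (u / ℓ) with hfudef
    set fv : ℝ := Int.fract (v / ℓ) with hfvdef
    have hu' : u = ((a:ℝ) + fu) * ℓ := by
      have h1 : ((a:ℝ)) + fu = u / ℓ := by rw [hadef, hfudef]; exact Int.floor_add_fract _
      rw [h1, div_mul_cancel₀ _ (ne_of_gt hℓpos)]
    have hv' : v = ((b:ℝ) + fv) * ℓ := by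
      have h1 : ((b:ℝ)) + fv = v / ℓ := by rw [hbdef, hfvdef]; exact Int.floor_add_fract _
      rw [h1, div_mul_cancel₀ _ (ne_of_gt hℓpos)]
    have hfu0 : 0 ≤ fu := Int.fract_nonneg _
    have hfu1 : fu < 1 := Int.fract_lt_one _
    have hfv0 : 0 ≤ fv := Int.fract_nonneg _
    have hfv1 : fv < 1 := Int.fract_lt_one _
    have hform : (u - v) - (n:ℝ) * p = ((3 * (t:ℝ)) + (fu - fv)) * ℓ := by
      have h3 : ((a:ℝ) - b - 3 * m * n) = 3 * t := by exact_mod_cast congrArg (Int.cast : ℤ → ℝ) ht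
      rw [hu', hv', hpℓ]; nlinarith [h3]
    rw [hform] at hdist
    rcases eq_or_ne t 0 with ht0 | ht0
    · have : dist x y < ℓ := by
        rw [hdist, ht0]
        push_cast
        rw [abs_lt]
        constructor <;> nlinarith
      linarith [hlo.trans_lt this]
    · have h2ℓ : 2 * ℓ < dist x y := by
        rw [hdist]
        rcases lt_or_gt_of_ne ht0 with htneg | htpos
        · have htle : (t:ℝ) ≤ -1 := by
            have h' : t ≤ -1 := by omega
            exact_mod_cast h'
          calc 2 * ℓ < -(((3 * (t:ℝ)) + (fu - fv)) * ℓ) := by nlinarith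
            _ ≤ |((3 * (t:ℝ)) + (fu - fv)) * ℓ| := neg_le_abs _
        · have htge : (1:ℝ) ≤ (t:ℝ) := by exact_mod_cast htpos
          calc 2 * ℓ < ((3 * (t:ℝ)) + (fu - fv)) * ℓ := by nlinarith
            _ ≤ |((3 * (t:ℝ)) + (fu - fv)) * ℓ| := le_abs_self _
      linarith [hhi.trans_lt (by linarith : α + ε < dist x y)]
  have hcolorable : (cDistGraphAll α ε).Colorable 3 :=
    ⟨SimpleGraph.Coloring.mk col key⟩
  have := hcolorable.chromaticNumber_le
  exact_mod_cast this
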